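/- Let f : ℕ → [0,∞) with f(0) > f(k) for k ≥ 1, a > 0, and let (y_k) solve y_0 = 1, y_k = (1/(f(0)−f(k))) ∑_{j=0}^{k−1} y_j f(j) a^{k−j}/(k−j)!. Then for all k ≥ 1, y_k = (a^k/k!)·(f(0)/(f(0)−f(k)))·(1 + ∑_{1≤h<k} ∑_{1≤i_1<⋯<i_h<k} [k!/(i_1!(i_2−i_1)!⋯(k−i_h)!)] ∏_{t=1}^h f(i_t)/(f(0)−f(i_t))). -/

import Mathlib

open Finset

/-- For a chain `1 ≤ i₁ < ⋯ < i_h < k` encoded as the finset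
    `S = {i₁, …, i_h} ⊆ (0, k)`, the product of factorials
    `i₁! (i₂ - i₁)! ⋯ (k - i_h)!` of the successive gaps. -/
def gapFactorials (k : ℕ) (S : Finset ℕ) : ℝ :=
  let L : List ℕ := 0 :: (S.sort (· ≤ ·) ++ [k])
  (List.zipWith (fun p n => ((Nat.factorial (n - p) : ℕ) : ℝ)) L L.tail).prod

/-- Gap-factorial product of a list. -/
noncomputable def gp (L : List ℕ) : ℝ :=
  (List.zipWith (fun p n => ((Nat.factorial (n - p) : ℕ) : ℝ)) L L.tail).prod

lemma gapFactorials_eq (k : ℕ) (S : Finset ℕ) :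
    gapFactorials k S = gp (0 :: (S.sort (· ≤ ·) ++ [k])) := rfl

lemma gp_cons_cons (x y : ℕ) (l : List ℕ) :
    gp (x :: y :: l) = (Nat.factorial (y - x) : ℝ) * gp (y :: l) := by
  simp [gp]

lemma gp_append_pair (l : List ℕ) : ∀ (x a b : ℕ),
    gp (x :: (l ++ [a, b])) = gp (x :: (l ++ [a])) * (Nat.factorial (b - a) : ℝ) := by
  induction l with
  | nil => intro x a b; simp [gp]
  | cons y l ih =>
      intro x a b
      simp only [List.cons_append, gp_cons_cons]
      rw [ih y a b]; ring

lemma gp_pos (l : List ℕ) : 0 < gp l := by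
  induction l with
  | nil => simp [gp]
  | cons x l ih =>
      cases l with
      | nil => simp [gp]
      | cons y m =>
          rw [gp_cons_cons]
          exact mul_pos (by positivity) ih

lemma sort_insert_max {j : ℕ} {S : Finset ℕ} (h : ∀ i ∈ S, i < j) :
    (insert j S).sort (· ≤ ·) = S.sort (· ≤ ·) ++ [j] := by
  have hj : j ∉ S := fun hm => lt_irrefl j (h j hm)
  have hperm : ((insert j S).sort (· ≤ ·)).Perm (S.sort (· ≤ ·) ++ [j]) := by
    rw [← Multiset.coe_eq_coe, Finset.sort_eq, Finset.insert_val_of_notMem hj,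
      ← Multiset.coe_add, Multiset.coe_singleton, Finset.sort_eq,
      ← Multiset.singleton_add, add_comm]
  have hs2 : List.Pairwise (· ≤ ·) (S.sort (· ≤ ·) ++ [j]) := by
    rw [List.pairwise_append]
    refine ⟨Finset.pairwise_sort _ _, by simp, ?_⟩
    intro a ha b hb
    rw [List.mem_singleton] at hb
    subst hb
    exact le_of_lt (h a ((Finset.mem_sort _).mp ha))
  exact List.Perm.eq_of_pairwise' (Finset.pairwise_sort _ _) hs2 hperm

lemma gapFactorials_insert {j k : ℕ} {S : Finset ℕ} (hjk : j < k) (h : ∀ i ∈ S, i < j) :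
    gapFactorials k (insert j S) = gapFactorials j S * (Nat.factorial (k - j) : ℝ) := by
  rw [gapFactorials_eq, gapFactorials_eq, sort_insert_max h]
  have : S.sort (· ≤ ·) ++ [j] ++ [k] = S.sort (· ≤ ·) ++ [j, k] := by simp
  rw [this, gp_append_pair]

lemma gapFactorials_empty (k : ℕ) : gapFactorials k ∅ = (Nat.factorial k : ℝ) := by
  simp [gapFactorials_eq, gp]

lemma gapFactorials_pos (k : ℕ) (S : Finset ℕ) : 0 < gapFactorials k S := by
  rw [gapFactorials_eq]; exact gp_pos _

/-- The key combinatorial decomposition by the maximum element. -/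
lemma sum_powerset_decomp (g : ℕ → ℝ) (k : ℕ) (hk : 1 ≤ k) :
    ∑ S ∈ (Finset.Ioo 0 k).powerset, (1 / gapFactorials k S) * ∏ i ∈ S, g i
      = 1 / (Nat.factorial k : ℝ)
        + ∑ j ∈ Finset.Ico 1 k, (g j / (Nat.factorial (k - j) : ℝ)) *
            ∑ S ∈ (Finset.Ioo 0 j).powerset, (1 / gapFactorials j S) * ∏ i ∈ S, g i := by
  classical
  have hsplit : (Finset.Ioo 0 k).powerset =
      insert ∅ ((Finset.Ioo 0 k).powerset.erase ∅) := by
    rw [Finset.insert_erase (Finset.empty_mem_powerset _)]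
  rw [hsplit, Finset.sum_insert (Finset.notMem_erase _ _)]
  rw [gapFactorials_empty, Finset.prod_empty, mul_one]
  congr 1
  -- now the nonempty subsets sum
  have hsig : (∑ j ∈ Finset.Ico 1 k, ∑ S ∈ (Finset.Ioo 0 j).powerset,
        (g j / (Nat.factorial (k - j) : ℝ)) * ((1 / gapFactorials j S) * ∏ i ∈ S, g i))
      = ∑ p ∈ (Finset.Ico 1 k).sigma (fun j => (Finset.Ioo 0 j).powerset),
        (g p.1 / (Nat.factorial (k - p.1) : ℝ)) *
          ((1 / gapFactorials p.1 p.2) * ∏ i ∈ p.2, g i) :=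
    Finset.sum_sigma' _ _ _
  simp only [Finset.mul_sum]
  rw [hsig]
  refine Finset.sum_nbij' (fun S => (⟨S.sup id, S.erase (S.sup id)⟩ : Σ _ : ℕ, Finset ℕ))
    (fun p => insert p.1 p.2) ?_ ?_ ?_ ?_ ?_
  · -- forward membership
    intro S hS
    rw [Finset.mem_erase, Finset.mem_powerset] at hS
    obtain ⟨hne, hsub⟩ := hS
    have hSne : S.Nonempty := Finset.nonempty_of_ne_empty hne
    have hmax : S.sup id = S.max' hSne := by
      rw [Finset.max', ← Finset.sup'_eq_sup hSne id]
    have hmem : S.sup id ∈ S := hmax ▸ S.max'_mem hSne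
    have hIoo := hsub hmem
    rw [Finset.mem_Ioo] at hIoo
    rw [Finset.mem_sigma, Finset.mem_Ico, Finset.mem_powerset]
    refine ⟨⟨hIoo.1, hIoo.2⟩, ?_⟩
    intro i hi
    rw [Finset.mem_erase] at hi
    have := hsub hi.2
    rw [Finset.mem_Ioo] at this
    rw [Finset.mem_Ioo]
    refine ⟨this.1, lt_of_le_of_ne ?_ hi.1⟩
    show i ≤ S.sup id
    exact le_trans (Finset.le_max' S i hi.2) (le_of_eq hmax.symm)
  · -- backward membership
    intro p hp
    rw [Finset.mem_sigma, Finset.mem_Ico, Finset.mem_powerset] at hp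
    rw [Finset.mem_erase, Finset.mem_powerset]
    constructor
    · exact Finset.insert_ne_empty _ _
    · rw [Finset.insert_subset_iff]
      refine ⟨Finset.mem_Ioo.mpr ⟨hp.1.1, hp.1.2⟩, hp.2.trans ?_⟩
      exact Finset.Ioo_subset_Ioo le_rfl (le_of_lt hp.1.2)
  · -- left inverse
    intro S hS
    rw [Finset.mem_erase, Finset.mem_powerset] at hS
    have hSne : S.Nonempty := Finset.nonempty_of_ne_empty hS.1
    have hmax : S.sup id = S.max' hSne := by
      rw [Finset.max', ← Finset.sup'_eq_sup hSne id]
    have hmem : S.sup id ∈ S := hmax ▸ S.max'_mem hSne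
    simp [Finset.insert_erase hmem]
  · -- right inverse
    intro p hp
    rw [Finset.mem_sigma, Finset.mem_Ico, Finset.mem_powerset] at hp
    have hnotmem : p.1 ∉ p.2 := fun hm => by
      have := hp.2 hm; rw [Finset.mem_Ioo] at this; exact lt_irrefl _ this.2
    have hsup : (insert p.1 p.2).sup id = p.1 := by
      apply le_antisymm
      · apply Finset.sup_le
        intro i hi
        rcases Finset.mem_insert.mp hi with h | h
        · exact le_of_eq h
        · have := hp.2 h; rw [Finset.mem_Ioo] at this; exact le_of_lt this.2
      · exact Finset.le_sup (f := id) (Finset.mem_insert_self _ _)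
    have : (insert p.1 p.2).erase p.1 = p.2 := Finset.erase_insert hnotmem
    ext <;> simp [hsup, this]
  · -- value equality
    intro S hS
    rw [Finset.mem_erase, Finset.mem_powerset] at hS
    have hSne : S.Nonempty := Finset.nonempty_of_ne_empty hS.1
    have hmax : S.sup id = S.max' hSne := by
      rw [Finset.max', ← Finset.sup'_eq_sup hSne id]
    have hmem : S.sup id ∈ S := hmax ▸ S.max'_mem hSne
    set m := S.sup id with hm
    have hIoo := hS.2 hmem
    rw [Finset.mem_Ioo] at hIoo
    have hlt : ∀ i ∈ S.erase m, i < m := by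
      intro i hi
      rw [Finset.mem_erase] at hi
      refine lt_of_le_of_ne ?_ hi.1
      exact le_trans (Finset.le_max' S i hi.2) (le_of_eq hmax.symm)
    have hins : insert m (S.erase m) = S := Finset.insert_erase hmem
    rw [← hins, gapFactorials_insert hIoo.2 hlt,
      Finset.prod_insert (Finset.notMem_erase _ _)]
    have h1 : (0:ℝ) < gapFactorials m (S.erase m) := gapFactorials_pos _ _
    have h2 : (0:ℝ) < (Nat.factorial (k - m) : ℝ) := by positivity
    field_simp
    ring_nf
    simp
    field_simp

theorem multinomial_formula
    (f : ℕ → ℝ) (hf0 : ∀ k, 0 ≤ f k) (hf : ∀ k, 1 ≤ k → f k < f 0)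
    (a : ℝ) (ha : 0 < a)
    (y : ℕ → ℝ) (hy0 : y 0 = 1)
    (hy : ∀ k, 1 ≤ k →
      y k = (1 / (f 0 - f k)) *
        ∑ j ∈ Finset.range k, y j * f j * a ^ (k - j) / (Nat.factorial (k - j))) :
    ∀ k, 1 ≤ k →
      y k = a ^ k / (Nat.factorial k) * (f 0 / (f 0 - f k)) *
        ∑ S ∈ (Finset.Ioo 0 k).powerset,
          ((Nat.factorial k : ℝ) / gapFactorials k S) *
            ∏ i ∈ S, f i / (f 0 - f i) := by
  set g : ℕ → ℝ := fun i => f i / (f 0 - f i) with hg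
  set V : ℕ → ℝ := fun k =>
    ∑ S ∈ (Finset.Ioo 0 k).powerset, (1 / gapFactorials k S) * ∏ i ∈ S, g i with hV
  have key : ∀ k, 1 ≤ k → y k = a ^ k * (f 0 / (f 0 - f k)) * V k := by
    intro k
    induction k using Nat.strong_induction_on with
    | _ k ih =>
      intro hk
      have hne : f 0 - f k ≠ 0 := sub_ne_zero.mpr (ne_of_gt (hf k hk))
      rw [hy k hk]
      have hsum : ∑ j ∈ Finset.range k, y j * f j * a ^ (k - j) / (Nat.factorial (k - j))
          = a ^ k * f 0 * V k := by
        rw [Finset.range_eq_Ico, Finset.sum_eq_sum_Ico_succ_bot hk]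
        have hterm : ∀ j ∈ Finset.Ico 1 k,
            y j * f j * a ^ (k - j) / (Nat.factorial (k - j))
              = a ^ k * f 0 * ((g j / (Nat.factorial (k - j) : ℝ)) * V j) := by
          intro j hj
          rw [Finset.mem_Ico] at hj
          rw [ih j hj.2 hj.1]
          have hnej : f 0 - f j ≠ 0 := sub_ne_zero.mpr (ne_of_gt (hf j hj.1))
          have hpow : a ^ k = a ^ j * a ^ (k - j) := by
            rw [← pow_add]; congr 1; omega
          have hfac : (Nat.factorial (k - j) : ℝ) ≠ 0 := by positivity
          rw [hg, hpow]
          field_simp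
        rw [Finset.sum_congr rfl hterm, ← Finset.mul_sum, hy0]
        have hVk := sum_powerset_decomp g k hk
        rw [hV]
        simp only
        rw [hVk, mul_add]
        simp only [Nat.sub_zero]
        ring
      rw [hsum]
      field_simp
  intro k hk
  rw [key k hk]
  have hfack : (Nat.factorial k : ℝ) ≠ 0 := by positivity
  have hsum2 : ∑ S ∈ (Finset.Ioo 0 k).powerset,
      ((Nat.factorial k : ℝ) / gapFactorials k S) * ∏ i ∈ S, f i / (f 0 - f i)
      = (Nat.factorial k : ℝ) * V k := by
    rw [hV, Finset.mul_sum]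
    refine Finset.sum_congr rfl fun S _ => ?_
    rw [hg]
    ring
  have hne : f 0 - f k ≠ 0 := sub_ne_zero.mpr (ne_of_gt (hf k hk))
  rw [hsum2]
  field_simp
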